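/- Let $a,b,c,d,e,f,p,q,r$ be positive real numbers with $d = \frac{pb-qa}{q+2p}$ and $f = \frac{qe}{p}$. Suppose $x,y,z > 0$ satisfy $q(-\frac{a}{x}-d\frac{x}{y^2}-e\frac{x}{z^2}) = p(-\frac{b}{y}+2d\frac{x}{y^2}-f\frac{y}{z^2})$ and $r(-\frac{a}{x}-d\frac{x}{y^2}-e\frac{x}{z^2}) = p(-\frac{c}{z}+2e\frac{x}{z^2}+2f\frac{y}{z^2})$, with $x \ne y$. Then $z/y$ is a root of the quartic $(2d(q+2p)+bq)dr\,u^4 - (q+2p)cdq\,u^3 + (2d(r+q)(q+2p)+(r+2p)aq)f\,u^2 - cfpq\,u + (r+2q)f^2p$. -/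

import Mathlib

set_option maxHeartbeats 2000000 in


theorem stmt_13 (a b c d e f p q r : ℝ)
    (ha : 0 < a) (hb : 0 < b) (hc : 0 < c) (hd : 0 < d) (he : 0 < e)
    (hf : 0 < f) (hp : 0 < p) (hq : 0 < q) (hr : 0 < r)
    (hdval : d = (p * b - q * a) / (q + 2 * p)) (hfval : f = q * e / p)
    (x y z : ℝ) (hx : 0 < x) (hy : 0 < y) (hz : 0 < z)
    (h1 : q * (-(a / x) - d * (x / y^2) - e * (x / z^2)) =
          p * (-(b / y) + 2 * d * (x / y^2) - f * (y / z^2)))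
    (h2 : r * (-(a / x) - d * (x / y^2) - e * (x / z^2)) =
          p * (-(c / z) + 2 * e * (x / z^2) + 2 * f * (y / z^2)))
    (hxy : x ≠ y) :
    (2 * d * (q + 2 * p) + b * q) * d * r * (z / y)^4
      - (q + 2 * p) * c * d * q * (z / y)^3
      + (2 * d * (r + q) * (q + 2 * p) + (r + 2 * p) * a * q) * f * (z / y)^2
      - c * f * p * q * (z / y) + (r + 2 * q) * f^2 * p = 0 := by
  subst hdval hfval
  have hwpos : (0:ℝ) < q + 2 * p := by positivity
  have hw : q + 2 * p ≠ 0 := hwpos.ne'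
  have hx0 := hx.ne'
  have hy0 := hy.ne'
  have hz0 := hz.ne'
  have hp0 := hp.ne'
  have hdd : 0 < p * b - q * a := by
    rcases div_pos_iff.1 hd with ⟨h, _⟩ | ⟨_, h2'⟩
    · exact h
    · linarith
  have hS2 : 0 < q * e * y ^ 2 + (p * b - q * a) * z ^ 2 := by positivity
  field_simp at h1 h2 ⊢
  -- key equation: x = q a y z^2 / S2
  have h0 : (x - y) * (x * (q * e * y ^ 2 + (p * b - q * a) * z ^ 2) - q * a * y * z ^ 2) = 0 := by
    have h0' : p * (q + 2 * p) ^ 2 * y ^ 3 * z ^ 2 *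
        ((x - y) * (x * (q * e * y ^ 2 + (p * b - q * a) * z ^ 2) - q * a * y * z ^ 2)) = 0 := by
      linear_combination (-(p * (q + 2 * p) * y ^ 3 * z ^ 2)) * h1
    have hnz : p * (q + 2 * p) ^ 2 * y ^ 3 * z ^ 2 ≠ 0 := by positivity
    exact (mul_eq_zero.1 h0').resolve_left hnz
  have key : x * (q * e * y ^ 2 + (p * b - q * a) * z ^ 2) = q * a * y * z ^ 2 := by
    rcases mul_eq_zero.1 h0 with h | h
    · exact absurd (by linarith) hxy
    · linarith
  have hbig : p * z ^ 5 * (a * y ^ 2 * z ^ 2 *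
      (q * e * y ^ 2 + (p * b - q * a) * z ^ 2) ^ 2 *
      (e^2*q^3*r*y^4 + 2*e^2*q^4*y^4 + 2*e^2*p*q^2*r*y^4 + 4*e^2*p*q^3*y^4 - 1*c*e*p*q^3*y^3*z - 2*c*e*p^2*q^2*y^3*z + 2*b*e*p*q^2*r*y^2*z^2 + 2*b*e*p*q^3*y^2*z^2 + 4*b*e*p^2*q*r*y^2*z^2 + 4*b*e*p^2*q^2*y^2*z^2 - 1*b*c*p^2*q^2*y*z^3 - 2*b*c*p^3*q*y*z^3 + b^2*p^2*q*r*z^4 + 2*b^2*p^3*r*z^4 - 1*a*e*q^3*r*y^2*z^2 - 2*a*e*q^4*y^2*z^2 - 2*a*e*p*q^2*r*y^2*z^2 - 2*a*e*p*q^3*y^2*z^2 + 4*a*e*p^2*q^2*y^2*z^2 + a*c*p*q^3*y*z^3 + 2*a*c*p^2*q^2*y*z^3 - 1*a*b*p*q^2*r*z^4 - 4*a*b*p^2*q*r*z^4 + 2*a^2*p*q^2*r*z^4)) = 0 := by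
    linear_combination (p * z ^ 5 * (-1*e^4*q^4*r*x*y^8 - 2*e^4*q^5*y^9 - 2*e^4*p*q^3*r*x*y^8 - 4*e^4*p*q^4*y^9 - 2*e^4*p*q^4*x*y^8 - 4*e^4*p^2*q^3*x*y^8 + c*e^3*p*q^4*y^8*z + 2*c*e^3*p^2*q^3*y^8*z - 4*b*e^3*p*q^3*r*x*y^6*z^2 - 6*b*e^3*p*q^4*y^7*z^2 - 6*b*e^3*p^2*q^2*r*x*y^6*z^2 - 12*b*e^3*p^2*q^3*y^7*z^2 - 6*b*e^3*p^2*q^3*x*y^6*z^2 - 12*b*e^3*p^3*q^2*x*y^6*z^2 + 3*b*c*e^2*p^2*q^3*y^6*z^3 + 6*b*c*e^2*p^3*q^2*y^6*z^3 - 6*b^2*e^2*p^2*q^2*r*x*y^4*z^4 - 6*b^2*e^2*p^2*q^3*y^5*z^4 - 6*b^2*e^2*p^3*q*r*x*y^4*z^4 - 12*b^2*e^2*p^3*q^2*y^5*z^4 - 6*b^2*e^2*p^3*q^2*x*y^4*z^4 - 12*b^2*e^2*p^4*q*x*y^4*z^4 + 3*b^2*c*e*p^3*q^2*y^4*z^5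 + 6*b^2*c*e*p^4*q*y^4*z^5 - 4*b^3*e*p^3*q*r*x*y^2*z^6 - 2*b^3*e*p^3*q^2*y^3*z^6 - 2*b^3*e*p^4*r*x*y^2*z^6 - 4*b^3*e*p^4*q*y^3*z^6 - 2*b^3*e*p^4*q*x*y^2*z^6 - 4*b^3*e*p^5*x*y^2*z^6 + b^3*c*p^4*q*y^2*z^7 + 2*b^3*c*p^5*y^2*z^7 - 1*b^4*p^4*r*x*z^8 - 1*a*e^3*q^4*r*y^7*z^2 + 4*a*e^3*q^4*r*x*y^6*z^2 + 6*a*e^3*q^5*y^7*z^2 - 2*a*e^3*p*q^3*r*y^7*z^2 + 6*a*e^3*p*q^3*r*x*y^6*z^2 + 10*a*e^3*p*q^4*y^7*z^2 + 6*a*e^3*p*q^4*x*y^6*z^2 - 4*a*e^3*p^2*q^3*y^7*z^2 + 12*a*e^3*p^2*q^3*x*y^6*z^2 - 3*a*c*e^2*p*q^4*y^6*z^3 - 6*a*c*e^2*p^2*q^3*y^6*z^3 - 3*a*b*e^2*p*q^3*r*y^5*z^4 + 12*a*b*e^2*p*q^3*r*x*y^4*z^4 + 12*a*b*e^2*p*q^4*y^5*z^4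 - 4*a*b*e^2*p^2*q^2*r*y^5*z^4 + 12*a*b*e^2*p^2*q^2*r*x*y^4*z^4 + 20*a*b*e^2*p^2*q^3*y^5*z^4 + 12*a*b*e^2*p^2*q^3*x*y^4*z^4 - 8*a*b*e^2*p^3*q^2*y^5*z^4 + 24*a*b*e^2*p^3*q^2*x*y^4*z^4 - 6*a*b*c*e*p^2*q^3*y^4*z^5 - 12*a*b*c*e*p^3*q^2*y^4*z^5 - 3*a*b^2*e*p^2*q^2*r*y^3*z^6 + 12*a*b^2*e*p^2*q^2*r*x*y^2*z^6 + 6*a*b^2*e*p^2*q^3*y^3*z^6 - 2*a*b^2*e*p^3*q*r*y^3*z^6 + 6*a*b^2*e*p^3*q*r*x*y^2*z^6 + 10*a*b^2*e*p^3*q^2*y^3*z^6 + 6*a*b^2*e*p^3*q^2*x*y^2*z^6 - 4*a*b^2*e*p^4*q*y^3*z^6 + 12*a*b^2*e*p^4*q*x*y^2*z^6 - 3*a*b^2*c*p^3*q^2*y^2*z^7 - 6*a*b^2*c*p^4*q*y^2*z^7 - 1*a*b^3*p^3*q*r*y*z^8 + 4*a*b^3*p^3*q*r*x*z^8 + 3*a^2*e^2*q^4*r*y^5*z^4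 - 6*a^2*e^2*q^4*r*x*y^4*z^4 - 6*a^2*e^2*q^5*y^5*z^4 + 4*a^2*e^2*p*q^3*r*y^5*z^4 - 6*a^2*e^2*p*q^3*r*x*y^4*z^4 - 8*a^2*e^2*p*q^4*y^5*z^4 - 6*a^2*e^2*p*q^4*x*y^4*z^4 + 8*a^2*e^2*p^2*q^3*y^5*z^4 - 12*a^2*e^2*p^2*q^3*x*y^4*z^4 + 3*a^2*c*e*p*q^4*y^4*z^5 + 6*a^2*c*e*p^2*q^3*y^4*z^5 + 6*a^2*b*e*p*q^3*r*y^3*z^6 - 12*a^2*b*e*p*q^3*r*x*y^2*z^6 - 6*a^2*b*e*p*q^4*y^3*z^6 + 4*a^2*b*e*p^2*q^2*r*y^3*z^6 - 6*a^2*b*e*p^2*q^2*r*x*y^2*z^6 - 8*a^2*b*e*p^2*q^3*y^3*z^6 - 6*a^2*b*e*p^2*q^3*x*y^2*z^6 + 8*a^2*b*e*p^3*q^2*y^3*z^6 - 12*a^2*b*e*p^3*q^2*x*y^2*z^6 + 3*a^2*b*c*p^2*q^3*y^2*z^7 + 6*a^2*b*c*p^3*q^2*y^2*z^7 + 3*a^2*b^2*p^2*q^2*r*y*z^8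 - 6*a^2*b^2*p^2*q^2*r*x*z^8 - 3*a^3*e*q^4*r*y^3*z^6 + 4*a^3*e*q^4*r*x*y^2*z^6 + 2*a^3*e*q^5*y^3*z^6 - 2*a^3*e*p*q^3*r*y^3*z^6 + 2*a^3*e*p*q^3*r*x*y^2*z^6 + 2*a^3*e*p*q^4*y^3*z^6 + 2*a^3*e*p*q^4*x*y^2*z^6 - 4*a^3*e*p^2*q^3*y^3*z^6 + 4*a^3*e*p^2*q^3*x*y^2*z^6 - 1*a^3*c*p*q^4*y^2*z^7 - 2*a^3*c*p^2*q^3*y^2*z^7 - 3*a^3*b*p*q^3*r*y*z^8 + 4*a^3*b*p*q^3*r*x*z^8 + a^4*q^4*r*y*z^8 - 1*a^4*q^4*r*x*z^8)) * key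
      - (p * z ^ 5 * (q * e * y ^ 2 + (p * b - q * a) * z ^ 2) ^ 4) * h2
  have hG : (e^2*q^3*r*y^4 + 2*e^2*q^4*y^4 + 2*e^2*p*q^2*r*y^4 + 4*e^2*p*q^3*y^4 - 1*c*e*p*q^3*y^3*z - 2*c*e*p^2*q^2*y^3*z + 2*b*e*p*q^2*r*y^2*z^2 + 2*b*e*p*q^3*y^2*z^2 + 4*b*e*p^2*q*r*y^2*z^2 + 4*b*e*p^2*q^2*y^2*z^2 - 1*b*c*p^2*q^2*y*z^3 - 2*b*c*p^3*q*y*z^3 + b^2*p^2*q*r*z^4 + 2*b^2*p^3*r*z^4 - 1*a*e*q^3*r*y^2*z^2 - 2*a*e*q^4*y^2*z^2 - 2*a*e*p*q^2*r*y^2*z^2 - 2*a*e*p*q^3*y^2*z^2 + 4*a*e*p^2*q^2*y^2*z^2 + a*c*p*q^3*y*z^3 + 2*a*c*p^2*q^2*y*z^3 - 1*a*b*p*q^2*r*z^4 - 4*a*b*p^2*q*r*z^4 + 2*a^2*p*q^2*r*z^4) = 0 := by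
    have hnz : p * z ^ 5 * (a * y ^ 2 * z ^ 2 *
        (q * e * y ^ 2 + (p * b - q * a) * z ^ 2) ^ 2) ≠ 0 := by positivity
    have := mul_eq_zero.1 (by linear_combination hbig :
      (p * z ^ 5 * (a * y ^ 2 * z ^ 2 * (q * e * y ^ 2 + (p * b - q * a) * z ^ 2) ^ 2)) *
      (e^2*q^3*r*y^4 + 2*e^2*q^4*y^4 + 2*e^2*p*q^2*r*y^4 + 4*e^2*p*q^3*y^4 - 1*c*e*p*q^3*y^3*z - 2*c*e*p^2*q^2*y^3*z + 2*b*e*p*q^2*r*y^2*z^2 + 2*b*e*p*q^3*y^2*z^2 + 4*b*e*p^2*q*r*y^2*z^2 + 4*b*e*p^2*q^2*y^2*z^2 - 1*b*c*p^2*q^2*y*z^3 - 2*b*c*p^3*q*y*z^3 + b^2*p^2*q*r*z^4 + 2*b^2*p^3*r*z^4 - 1*a*e*q^3*r*y^2*z^2 - 2*a*e*q^4*y^2*z^2 - 2*a*e*p*q^2*r*y^2*z^2 - 2*a*e*p*q^3*y^2*z^2 + 4*a*e*p^2*q^2*y^2*z^2 + a*c*p*q^3*y*z^3 + 2*a*c*p^2*q^2*y*z^3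 - 1*a*b*p*q^2*r*z^4 - 4*a*b*p^2*q*r*z^4 + 2*a^2*p*q^2*r*z^4) = 0)
    exact this.resolve_left hnz
  linear_combination hG
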